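/- Let A be an M×N matrix satisfying the RIP of order K with constant δ ∈ (0,1), and let Λ ⊂ {1,…,N} with |Λ| < K. Let P_Λ be the orthogonal projection onto the column span of A_Λ (the columns of A indexed by Λ) and P_Λ^⊥ = I − P_Λ. Then for all u ∈ R^N with ||u||_0 ≤ K − |Λ| and supp(u) ∩ Λ = ∅, we have (1 − δ/(1−δ)) ||u||_2^2 ≤ ||P_Λ^⊥ A u||_2^2 ≤ (1+δ) ||u||_2^2. -/

import Mathlib

/-- Squared Euclidean norm of a vector. -/
def sqnorm {n : Type*} [Fintype n] (x : n → ℝ) : ℝ := ∑ i, x i ^ 2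

/-- A matrix `A` satisfies the restricted isometry property (RIP) of order `K`
with constant `δ` if `(1-δ)‖x‖² ≤ ‖Ax‖² ≤ (1+δ)‖x‖²` for all `K`-sparse `x`. -/
def RIP {m n : Type*} [Fintype m] [Fintype n] (A : Matrix m n ℝ) (K : ℕ) (δ : ℝ) : Prop :=
  ∀ x : n → ℝ, (Function.support x).ncard ≤ K →
    (1 - δ) * sqnorm x ≤ sqnorm (A.mulVec x) ∧ sqnorm (A.mulVec x) ≤ (1 + δ) * sqnorm x

namespace ProjRipAux

/-- Dot product of real vectors. -/
def dotp {n : Type*} [Fintype n] (x y : n → ℝ) : ℝ := ∑ i, x i * y i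

lemma sqnorm_nonneg {n : Type*} [Fintype n] (x : n → ℝ) : 0 ≤ sqnorm x :=
  Finset.sum_nonneg fun _ _ => sq_nonneg _

lemma sqnorm_add {n : Type*} [Fintype n] (x y : n → ℝ) :
    sqnorm (x + y) = sqnorm x + 2 * dotp x y + sqnorm y := by
  simp only [sqnorm, dotp, Pi.add_apply, Finset.mul_sum, ← Finset.sum_add_distrib]
  exact Finset.sum_congr rfl fun i _ => by ring

lemma dotp_neg_right {n : Type*} [Fintype n] (x y : n → ℝ) : dotp x (-y) = - dotp x y := by
  simp [dotp]

lemma sqnorm_neg {n : Type*} [Fintype n] (y : n → ℝ) : sqnorm (-y) = sqnorm y := by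
  simp [sqnorm]

lemma sqnorm_sub {n : Type*} [Fintype n] (x y : n → ℝ) :
    sqnorm (x - y) = sqnorm x - 2 * dotp x y + sqnorm y := by
  rw [sub_eq_add_neg, sqnorm_add, dotp_neg_right, sqnorm_neg]; ring

lemma dotp_smul_left {n : Type*} [Fintype n] (t : ℝ) (x y : n → ℝ) :
    dotp (t • x) y = t * dotp x y := by
  simp only [dotp, Pi.smul_apply, smul_eq_mul, Finset.mul_sum, mul_assoc]

lemma sqnorm_smul {n : Type*} [Fintype n] (t : ℝ) (x : n → ℝ) :
    sqnorm (t • x) = t ^ 2 * sqnorm x := by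
  simp only [sqnorm, Pi.smul_apply, smul_eq_mul, Finset.mul_sum, mul_pow]

lemma ncard_support_le {N : ℕ} {x : Fin N → ℝ} {s : Finset (Fin N)}
    (h : Function.support x ⊆ ↑s) : (Function.support x).ncard ≤ s.card := by
  have := Set.ncard_le_ncard h s.finite_toSet
  simpa [Set.ncard_coe_finset] using this

/-- Parallelogram / RIP bound on the inner product of images of disjointly
supported sparse vectors. -/
lemma inner_half {M N K : ℕ} {A : Matrix (Fin M) (Fin N) ℝ} {δ : ℝ}
    (hA : RIP A K δ) (z u : Fin N → ℝ)
    (hd : ∀ j, z j = 0 ∨ u j = 0)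
    (hc : (Function.support z).ncard + (Function.support u).ncard ≤ K) :
    dotp (A.mulVec z) (A.mulVec u) ≤ δ / 2 * (sqnorm z + sqnorm u) := by
  have hdzu : dotp z u = 0 :=
    Finset.sum_eq_zero fun j _ => by rcases hd j with h | h <;> simp [h]
  have hcard : ∀ v : Fin N → ℝ,
      Function.support v ⊆ Function.support z ∪ Function.support u →
      (Function.support v).ncard ≤ K := fun v hv =>
    le_trans (le_trans (Set.ncard_le_ncard hv (Set.Finite.union (Set.toFinite _) (Set.toFinite _)))
      (Set.ncard_union_le _ _)) hc
  have hadd := (hA (z + u) (hcard _ (Function.support_add z u))).2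
  have hsub := (hA (z - u) (hcard _ (Function.support_sub z u))).1
  rw [Matrix.mulVec_add, sqnorm_add, sqnorm_add, hdzu] at hadd
  rw [Matrix.mulVec_sub, sqnorm_sub, sqnorm_sub, hdzu] at hsub
  linarith

lemma inner_sq {M N K : ℕ} {A : Matrix (Fin M) (Fin N) ℝ} {δ : ℝ}
    (hA : RIP A K δ) (z u : Fin N → ℝ)
    (hd : ∀ j, z j = 0 ∨ u j = 0)
    (hc : (Function.support z).ncard + (Function.support u).ncard ≤ K) :
    (dotp (A.mulVec z) (A.mulVec u)) ^ 2 ≤ δ ^ 2 * sqnorm z * sqnorm u := by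
  set d := dotp (A.mulVec z) (A.mulVec u) with hdef
  have ht : ∀ t : ℝ, 0 ≤ (δ / 2 * sqnorm z) * (t * t) + (-d) * t + δ / 2 * sqnorm u := by
    intro t
    have hsub : Function.support (t • z) ⊆ Function.support z := by
      intro j hj
      simp only [Function.mem_support, Pi.smul_apply, smul_eq_mul] at hj ⊢
      exact fun h => hj (by rw [h, mul_zero])
    have hd' : ∀ j, (t • z) j = 0 ∨ u j = 0 := by
      intro j; rcases hd j with h | h
      · left; simp [h]
      · right; exact h
    have hc' : (Function.support (t • z)).ncard + (Function.support u).ncard ≤ K :=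
      le_trans (Nat.add_le_add_right (Set.ncard_le_ncard hsub (Set.toFinite _)) _) hc
    have := inner_half hA (t • z) u hd' hc'
    rw [Matrix.mulVec_smul, dotp_smul_left, sqnorm_smul] at this
    nlinarith [this]
  have hdisc := discrim_le_zero ht
  rw [discrim] at hdisc
  nlinarith [hdisc]

end ProjRipAux

set_option maxHeartbeats 1000000 in
open ProjRipAux in
/-- Modified RIP for the projected matrix `P_Λ^⊥ A`: nulling the component in the
column span of `A_Λ` nearly preserves the RIP on sparse vectors supported off `Λ`. -/
theorem projected_rip {M N K : ℕ} (A : Matrix (Fin M) (Fin N) ℝ) (δ : ℝ)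
    (hδ : δ ∈ Set.Ioo (0 : ℝ) 1) (hA : RIP A K δ)
    (Λ : Finset (Fin N)) (hΛ : Λ.card < K)
    (V : Submodule ℝ (EuclideanSpace ℝ (Fin M)))
    (hV : V = Submodule.span ℝ {v : EuclideanSpace ℝ (Fin M) | ∃ j ∈ Λ, v = fun i => A i j})
    (u : Fin N → ℝ)
    (hu : (Function.support u).ncard ≤ K - Λ.card)
    (hsupp : ∀ j ∈ Λ, u j = 0)
    (y : EuclideanSpace ℝ (Fin M)) (hy : y = A.mulVec u) :
    (1 - δ / (1 - δ)) * sqnorm u ≤ sqnorm ((y - ↑(V.orthogonalProjection y) : EuclideanSpace ℝ (Fin M)) : Fin M → ℝ)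
      ∧ sqnorm ((y - ↑(V.orthogonalProjection y) : EuclideanSpace ℝ (Fin M)) : Fin M → ℝ)
        ≤ (1 + δ) * sqnorm u := by
  obtain ⟨hδ0, hδ1⟩ := hδ
  -- membership of the projection in the span, expressed through a range
  have hset : {v : EuclideanSpace ℝ (Fin M) | ∃ j ∈ Λ, v = fun i => A i j}
      = Set.range (fun j : ↥Λ => (WithLp.toLp 2 (fun i => A i (j : Fin N)) : EuclideanSpace ℝ (Fin M))) := by
    ext v
    constructor
    · rintro ⟨j, hj, h⟩; exact ⟨⟨j, hj⟩, (congrArg (WithLp.toLp 2) h).symm⟩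
    · rintro ⟨⟨j, hj⟩, rfl⟩; exact ⟨j, hj, rfl⟩
  have hmem : (↑(V.orthogonalProjection y) : EuclideanSpace ℝ (Fin M))
      ∈ Submodule.span ℝ (Set.range (fun j : ↥Λ => (WithLp.toLp 2 (fun i => A i (j : Fin N)) : EuclideanSpace ℝ (Fin M)))) := by
    rw [← hset, ← hV]; exact SetLike.coe_mem _
  obtain ⟨w, hw⟩ := (Submodule.mem_span_range_iff_exists_fun ℝ).mp hmem
  -- plain-function versions of the projection and residual
  set pf : Fin M → ℝ := fun i => (↑(V.orthogonalProjection y) : EuclideanSpace ℝ (Fin M)) i with hpf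
  set qf : Fin M → ℝ := fun i => y i - pf i with hqf
  set yf : Fin M → ℝ := fun i => y i with hyf
  -- the coefficient vector z supported on Λ with A z = pf
  set z : Fin N → ℝ := fun j => if h : j ∈ Λ then w ⟨j, h⟩ else 0 with hz
  have hAz : A.mulVec z = pf := by
    funext i
    have h1 : (∑ j : ↥Λ, w j • (WithLp.toLp 2 (fun i => A i (j : Fin N)) : EuclideanSpace ℝ (Fin M))) i = pf i :=
      congrArg (fun v : EuclideanSpace ℝ (Fin M) => v i) hw
    have h2 : (∑ j : ↥Λ, w j • (WithLp.toLp 2 (fun i => A i (j : Fin N)) : EuclideanSpace ℝ (Fin M))) i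
        = ∑ j : ↥Λ, w j * A i (j : Fin N) := by
      rw [WithLp.ofLp_sum, Finset.sum_apply]
      rfl
    have h3 : A.mulVec z i = ∑ j : Fin N, A i j * z j := rfl
    rw [h3, ← h1, h2]
    rw [← Finset.sum_subset (Finset.subset_univ Λ) (by
      intro j _ hj
      simp [hz, dif_neg hj])]
    rw [← Finset.sum_attach Λ (fun j => A i j * z j)]
    refine Finset.sum_congr rfl fun j _ => ?_
    simp only [hz]
    rw [dif_pos j.2, mul_comm]
  have hzsupp : Function.support z ⊆ ↑Λ := by
    intro j hj
    by_contra hjj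
    refine hj ?_
    simp only [hz]
    exact dif_neg fun h => hjj (Finset.mem_coe.mpr h)
  have hzcard : (Function.support z).ncard ≤ Λ.card := ncard_support_le hzsupp
  have hdisj : ∀ j, z j = 0 ∨ u j = 0 := by
    intro j
    by_cases hj : j ∈ Λ
    · exact Or.inr (hsupp j hj)
    · refine Or.inl ?_
      simp only [hz]
      exact dif_neg hj
  have hcards : (Function.support z).ncard + (Function.support u).ncard ≤ K := by
    have := add_le_add hzcard hu
    omega
  have hucard : (Function.support u).ncard ≤ K := le_trans hu (Nat.sub_le _ _)
  -- orthogonality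
  have horthE : (inner (𝕜 := ℝ)
      (y - ↑(V.orthogonalProjection y)) (↑(V.orthogonalProjection y) : EuclideanSpace ℝ (Fin M))) = 0 :=
    V.starProjection_inner_eq_zero y _ (SetLike.coe_mem _)
  have horth : dotp qf pf = 0 := by
    rw [← horthE]
    simp only [PiLp.inner_apply, RCLike.inner_apply, starRingEnd_apply, star_trivial, dotp]
    exact Finset.sum_congr rfl fun i _ => mul_comm _ _
  have hgoalq : (y - (↑(V.orthogonalProjection y)) : EuclideanSpace ℝ (Fin M)) = qf :=
    funext fun i => rfl
  have hyqp : yf = qf + pf := by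
    funext i; simp [hqf, hyf]
  -- Pythagoras
  have hpyth : sqnorm yf = sqnorm qf + sqnorm pf := by
    rw [hyqp, sqnorm_add, horth]; ring
  -- RIP on u
  have hyAu : yf = A.mulVec u := by
    funext i; rw [hyf]; exact congrFun hy i
  have hyu1 : (1 - δ) * sqnorm u ≤ sqnorm yf := by
    rw [hyAu]; exact (hA u hucard).1
  have hyu2 : sqnorm yf ≤ (1 + δ) * sqnorm u := by
    rw [hyAu]; exact (hA u hucard).2
  -- RIP lower on z
  have hzl := (hA z (le_trans hzcard (le_of_lt hΛ))).1
  rw [hAz] at hzl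
  -- the squared norm of pf equals the inner product ⟨Az, Au⟩
  have hSd : sqnorm pf = dotp (A.mulVec z) (A.mulVec u) := by
    rw [hAz, ← hyAu]
    have h1 : dotp pf yf = dotp pf qf + dotp pf pf := by
      simp only [dotp, hqf, hyf, ← Finset.sum_add_distrib]
      exact Finset.sum_congr rfl fun i _ => by ring
    have hcomm : dotp pf qf = dotp qf pf := by
      simp only [dotp]; exact Finset.sum_congr rfl fun i _ => mul_comm _ _
    have hself : dotp pf pf = sqnorm pf := by
      simp only [dotp, sqnorm]; exact Finset.sum_congr rfl fun i _ => (sq (pf i)).symm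
    rw [h1, hcomm, horth, hself, zero_add]
  have hdsq := inner_sq hA z u hdisj hcards
  rw [← hSd] at hdsq
  -- final arithmetic
  set S := sqnorm pf with hS
  set Q := sqnorm qf with hQdef
  set b2 := sqnorm u with hb2
  set a2 := sqnorm z with ha2
  have hSnn : 0 ≤ S := sqnorm_nonneg _
  have hQnn : 0 ≤ Q := sqnorm_nonneg _
  have hbnn : 0 ≤ b2 := sqnorm_nonneg _
  have hann : 0 ≤ a2 := sqnorm_nonneg _
  have h1δ : (0:ℝ) < 1 - δ := by linarith
  have hkey : (1 - δ) * S ≤ δ ^ 2 * b2 := by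
    rcases eq_or_lt_of_le hSnn with hS0 | hS0
    · rw [← hS0]; nlinarith
    · nlinarith [mul_le_mul_of_nonneg_right hzl (mul_nonneg (mul_nonneg (sq_nonneg δ) hbnn) hSnn),
        mul_le_mul_of_nonneg_left hdsq h1δ.le,
        mul_le_mul_of_nonneg_left hzl (mul_nonneg (sq_nonneg δ) hbnn)]
  rw [hgoalq]
  constructor
  · show (1 - δ / (1 - δ)) * b2 ≤ Q
    have hrw : (1 - δ / (1 - δ)) * b2 = ((1 - δ) * b2 * (1 - δ) - δ ^ 2 * b2) / (1 - δ) := by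
      field_simp
      ring
    rw [hrw, div_le_iff₀ h1δ]
    nlinarith [mul_le_mul_of_nonneg_right hyu1 h1δ.le]
  · show Q ≤ (1 + δ) * b2
    linarith [hpyth ▸ hyu2]
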